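/- Let G = (V, E) be a finite simple graph with maximum degree Δ ≥ 1, f : 2^E → ℝ≥0 normalized, monotone and submodular, and b, k positive integers. Suppose S ⊆ V is obtained by greedily selecting vertices (maximizing marginal gain of h(S) = f(edges(S))) with |S| ≥ min(b, ⌊k/Δ⌋) and |S| ≤ b and |edges(S)| ≤ k. Then f(edges(S)) ≥ (1 - exp(-min{b, ⌊k/Δ⌋}/b)) · OPT₁, where OPT₁ = max { f(F) : F ⊆ E, |F| ≤ k, ∃ vertex cover C of F with |C| ≤ b }. -/

import Mathlib

open Finset
open scoped Classical

variable {V : Type*} [Fintype V] [DecidableEq V]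

/-- The set of edges of `G` incident to at least one vertex of `S`. -/
def edgesOf (G : SimpleGraph V) [DecidableRel G.Adj] (S : Finset V) : Finset (Sym2 V) :=
  G.edgeFinset.filter (fun e => ∃ v ∈ S, v ∈ e)

/-- `C` is a vertex cover of the edge set `F`. -/
def IsVertexCover (C : Finset V) (F : Finset (Sym2 V)) : Prop :=
  ∀ e ∈ F, ∃ v ∈ C, v ∈ e

/-- `gF G f k S`: maximum of `f F` over `F ⊆ edgesOf G S` with `|F| ≤ k` (inner problem of P₂). -/
noncomputable def gF (G : SimpleGraph V) [DecidableRel G.Adj] (f : Finset (Sym2 V) → ℝ)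
    (k : ℕ) (S : Finset V) : ℝ :=
  ((edgesOf G S).powerset.filter (fun F => F.card ≤ k)).sup' ⟨∅, by simp⟩ f

/-- Optimal value of problem P₁: maximize `f F` over `F ⊆ E` with `|F| ≤ k` admitting a
vertex cover of size at most `b`. -/
noncomputable def OPT1 (G : SimpleGraph V) [DecidableRel G.Adj] (f : Finset (Sym2 V) → ℝ)
    (k b : ℕ) : ℝ :=
  (G.edgeFinset.powerset.filter
      (fun F => F.card ≤ k ∧ ∃ C : Finset V, C.card ≤ b ∧ IsVertexCover C F)).sup'
    ⟨∅, by
      refine mem_filter.mpr ⟨mem_powerset.mpr (empty_subset _), by simp, ⟨∅, by simp, ?_⟩⟩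
      intro e he
      exact absurd he (Finset.notMem_empty e)⟩ f

/-- Optimal value of problem P₂: maximize `gF G f k S` over `S ⊆ V` with `|S| ≤ b`. -/
noncomputable def OPT2 (G : SimpleGraph V) [DecidableRel G.Adj] (f : Finset (Sym2 V) → ℝ)
    (k b : ℕ) : ℝ :=
  ((univ : Finset V).powerset.filter (fun S => S.card ≤ b)).sup' ⟨∅, by simp⟩ (gF G f k)

lemma edgesOf_mono (G : SimpleGraph V) [DecidableRel G.Adj] {S T : Finset V} (hST : S ⊆ T) :
    edgesOf G S ⊆ edgesOf G T := by
  intro e he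
  simp only [edgesOf, mem_filter] at he ⊢
  obtain ⟨h1, v, hv, hve⟩ := he
  exact ⟨h1, v, hST hv, hve⟩

lemma edgesOf_union (G : SimpleGraph V) [DecidableRel G.Adj] (S T : Finset V) :
    edgesOf G (S ∪ T) = edgesOf G S ∪ edgesOf G T := by
  ext e
  simp only [edgesOf, mem_filter, mem_union]
  constructor
  · rintro ⟨h1, v, hv | hv, hve⟩
    · exact Or.inl ⟨h1, v, hv, hve⟩
    · exact Or.inr ⟨h1, v, hv, hve⟩
  · rintro (⟨h1, v, hv, hve⟩ | ⟨h1, v, hv, hve⟩)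
    · exact ⟨h1, v, Or.inl hv, hve⟩
    · exact ⟨h1, v, Or.inr hv, hve⟩

lemma edgesOf_inter_subset (G : SimpleGraph V) [DecidableRel G.Adj] (S T : Finset V) :
    edgesOf G (S ∩ T) ⊆ edgesOf G S ∩ edgesOf G T := by
  intro e he
  simp only [edgesOf, mem_filter, mem_inter] at he ⊢
  obtain ⟨h1, v, hv, hve⟩ := he
  exact ⟨⟨h1, v, hv.1, hve⟩, ⟨h1, v, hv.2, hve⟩⟩

lemma edgesOf_empty (G : SimpleGraph V) [DecidableRel G.Adj] :
    edgesOf G (∅ : Finset V) = ∅ := by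
  simp [edgesOf]

/-- Vertex-Greedy guarantee. If `S` is produced by greedy vertex selection
(maximizing the marginal gain of `h(S) = f(edges(S))`), with
`|S| ≥ min(b, ⌊k/Δ⌋)`, `|S| ≤ b` and `|edges(S)| ≤ k`, then
`f(edges(S)) ≥ (1 - exp(-min{b,⌊k/Δ⌋}/b)) · OPT₁`. -/
theorem stmt_18 (G : SimpleGraph V) [DecidableRel G.Adj] (f : Finset (Sym2 V) → ℝ)
    (hnn : ∀ F, 0 ≤ f F) (hnorm : f ∅ = 0)
    (hmono : ∀ A B : Finset (Sym2 V), A ⊆ B → f A ≤ f B)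
    (hsub : ∀ A B : Finset (Sym2 V), f A + f B ≥ f (A ∪ B) + f (A ∩ B))
    (b k : ℕ) (hb : 0 < b) (hk : 0 < k) (hΔ : 1 ≤ G.maxDegree)
    (t : ℕ) (A : ℕ → Finset V) (hA0 : A 0 = ∅)
    (hstep : ∀ i < t, ∃ a ∉ A i, A (i + 1) = insert a (A i) ∧
      ∀ a' ∉ A i, f (edgesOf G (insert a' (A i))) ≤ f (edgesOf G (insert a (A i))))
    (S : Finset V) (hSt : S = A t)
    (hcard_lb : min b (k / G.maxDegree) ≤ S.card) (hcard_ub : S.card ≤ b)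
    (hedges : (edgesOf G S).card ≤ k) :
    f (edgesOf G S) ≥
      (1 - Real.exp (-((min b (k / G.maxDegree) : ℕ) : ℝ) / b)) * OPT1 G f k b := by
  classical
  set m : ℕ := min b (k / G.maxDegree) with hm
  set h : Finset V → ℝ := fun S => f (edgesOf G S) with hh
  have hb' : (0:ℝ) < b := by exact_mod_cast hb
  have hmonoV : ∀ {S T : Finset V}, S ⊆ T → h S ≤ h T := by
    intro S T hST
    exact hmono _ _ (edgesOf_mono G hST)
  have hsubV : ∀ S T : Finset V, h S + h T ≥ h (S ∪ T) + h (S ∩ T) := by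
    intro S T
    have h1 := hsub (edgesOf G S) (edgesOf G T)
    have h2 : f (edgesOf G (S ∩ T)) ≤ f (edgesOf G S ∩ edgesOf G T) :=
      hmono _ _ (edgesOf_inter_subset G S T)
    simp only [hh]
    rw [edgesOf_union]
    linarith
  have hempty : h ∅ = 0 := by
    simp only [hh, edgesOf_empty, hnorm]
  -- diminishing returns
  have hdim : ∀ (B C : Finset V) (v : V), B ⊆ C →
      h (insert v C) - h C ≤ h (insert v B) - h B := by
    intro B C v hBC
    by_cases hvC : v ∈ C
    · rw [insert_eq_self.mpr hvC]
      have := hmonoV (subset_insert v B)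
      linarith
    · have hu : insert v B ∪ C = insert v C := by
        rw [insert_union, union_eq_right.mpr hBC]
      have hi : insert v B ∩ C = B := by
        ext x
        simp only [mem_inter, mem_insert]
        constructor
        · rintro ⟨hx | hx, hxC⟩
          · exact absurd (hx ▸ hxC) hvC
          · exact hx
        · intro hx
          exact ⟨Or.inr hx, hBC hx⟩
      have := hsubV (insert v B) C
      rw [hu, hi] at this
      linarith
  -- sum of marginals bound
  have hsum : ∀ (D B : Finset V), h (B ∪ D) - h B ≤ ∑ v ∈ D, (h (insert v B) - h B) := by
    intro D
    induction D using Finset.induction_on with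
    | empty => intro B; simp
    | @insert v D hvD ih =>
      intro B
      rw [Finset.sum_insert hvD, union_insert]
      have h2 := hdim B (B ∪ D) v subset_union_left
      have h3 := ih B
      linarith
  -- a best vertex set of size ≤ b
  have hQne : ((univ : Finset V).powerset.filter (fun S => S.card ≤ b)).Nonempty :=
    ⟨∅, by simp⟩
  obtain ⟨Cs, hCsmem, hCs⟩ := Finset.exists_mem_eq_sup' hQne h
  have hCsb : Cs.card ≤ b := (mem_filter.mp hCsmem).2
  have hOPT1le : OPT1 G f k b ≤ h Cs := by
    rw [OPT1]
    apply Finset.sup'_le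
    intro F hF
    simp only [mem_filter, mem_powerset] at hF
    obtain ⟨hFE, hFk, C, hCb, hCcov⟩ := hF
    have hFsub : F ⊆ edgesOf G C := by
      intro e he
      simp only [edgesOf, mem_filter]
      exact ⟨hFE he, hCcov e he⟩
    have step1 : f F ≤ h C := hmono _ _ hFsub
    have step2 : h C ≤ h Cs := by
      rw [← hCs]
      exact Finset.le_sup' h (mem_filter.mpr ⟨mem_powerset.mpr (subset_univ C), hCb⟩)
    linarith
  have hOPT1nn : 0 ≤ OPT1 G f k b := by
    rw [OPT1]
    have hmem : (∅ : Finset (Sym2 V)) ∈ G.edgeFinset.powerset.filter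
        (fun F => F.card ≤ k ∧ ∃ C : Finset V, C.card ≤ b ∧ IsVertexCover C F) := by
      refine mem_filter.mpr ⟨mem_powerset.mpr (empty_subset _), by simp, ⟨∅, by simp, ?_⟩⟩
      intro e he
      exact absurd he (Finset.notMem_empty e)
    have := Finset.le_sup' f hmem
    rw [hnorm] at this
    exact this
  -- key greedy inequality
  have hgain0 : ∀ i < t, 0 ≤ h (A (i+1)) - h (A i) := by
    intro i hi
    obtain ⟨a, ha, hA1, hmax⟩ := hstep i hi
    rw [hA1]
    have := hmonoV (subset_insert a (A i))
    linarith
  have hkey : ∀ i < t, h Cs - h (A i) ≤ (b : ℝ) * (h (A (i+1)) - h (A i)) := by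
    intro i hi
    obtain ⟨a, ha, hA1, hmax⟩ := hstep i hi
    have hg0 : 0 ≤ h (A (i+1)) - h (A i) := hgain0 i hi
    have h1 : h Cs ≤ h (A i ∪ Cs) := hmonoV subset_union_right
    have h2 : h (A i ∪ Cs) - h (A i) ≤ ∑ v ∈ Cs \ A i, (h (insert v (A i)) - h (A i)) := by
      have := hsum (Cs \ A i) (A i)
      rwa [union_sdiff_self_eq_union] at this
    have hbound : ∀ v ∈ Cs \ A i, h (insert v (A i)) - h (A i) ≤ h (A (i+1)) - h (A i) := by
      intro v hv
      rw [mem_sdiff] at hv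
      have hv' : h (insert v (A i)) ≤ h (insert a (A i)) := hmax v hv.2
      rw [hA1]
      exact sub_le_sub_right hv' _
    have h3 := Finset.sum_le_card_nsmul (Cs \ A i)
      (fun v => h (insert v (A i)) - h (A i)) (h (A (i+1)) - h (A i)) hbound
    rw [nsmul_eq_mul] at h3
    have h4 : ((Cs \ A i).card : ℝ) * (h (A (i+1)) - h (A i)) ≤
        (b : ℝ) * (h (A (i+1)) - h (A i)) := by
      apply mul_le_mul_of_nonneg_right _ hg0
      exact_mod_cast le_trans (card_le_card sdiff_subset) hCsb
    linarith
  have hq0 : (0:ℝ) ≤ 1 - 1/(b:ℝ) := by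
    have hb1 : (1:ℝ) ≤ (b:ℝ) := by exact_mod_cast hb
    have : 1/(b:ℝ) ≤ 1 := by
      rw [div_le_one hb']
      exact hb1
    linarith
  -- unroll the recurrence
  have hrec : ∀ i ≤ t, h Cs - h (A i) ≤ (1 - 1/(b:ℝ))^i * h Cs := by
    intro i
    induction i with
    | zero =>
      intro _
      rw [hA0, hempty, pow_zero, one_mul]
      linarith
    | succ i ih =>
      intro hi1
      have hi : i < t := hi1
      have ih' := ih (le_of_lt hi)
      have key := hkey i hi
      have h5 : (h Cs - h (A i)) / b ≤ h (A (i+1)) - h (A i) := by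
        rw [div_le_iff₀ hb']
        linarith [key]
      have heq : (1 - 1/(b:ℝ)) * (h Cs - h (A i)) =
          (h Cs - h (A i)) - (h Cs - h (A i))/b := by
        field_simp
      calc h Cs - h (A (i+1))
          ≤ (1 - 1/(b:ℝ)) * (h Cs - h (A i)) := by linarith
        _ ≤ (1 - 1/(b:ℝ)) * ((1 - 1/(b:ℝ))^i * h Cs) := mul_le_mul_of_nonneg_left ih' hq0
        _ = (1 - 1/(b:ℝ))^(i+1) * h Cs := by ring
  have hmain : (1 - (1 - 1/(b:ℝ))^t) * h Cs ≤ h (A t) := by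
    have := hrec t le_rfl
    rw [sub_mul, one_mul]
    linarith
  -- m ≤ t
  have hcardA : ∀ i ≤ t, (A i).card ≤ i := by
    intro i
    induction i with
    | zero => intro _; simp [hA0]
    | succ i ih =>
      intro hi1
      have hi : i < t := hi1
      obtain ⟨a, ha, hA1, _⟩ := hstep i hi
      rw [hA1]
      calc (insert a (A i)).card ≤ (A i).card + 1 := card_insert_le _ _
        _ ≤ i + 1 := Nat.succ_le_succ (ih (le_of_lt hi))
  have hmt : m ≤ t := by
    have h1 := hcardA t le_rfl
    rw [hSt] at hcard_lb
    omega
  -- analytic comparison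
  have hqe : (1 - 1/(b:ℝ))^t ≤ Real.exp (-(t:ℝ)/b) := by
    have h1 : 1 - 1/(b:ℝ) ≤ Real.exp (-(1/(b:ℝ))) := by
      have := Real.add_one_le_exp (-(1/(b:ℝ)))
      linarith
    calc (1 - 1/(b:ℝ))^t ≤ (Real.exp (-(1/(b:ℝ))))^t := pow_le_pow_left₀ hq0 h1 t
      _ = Real.exp (-(t:ℝ)/b) := by
        rw [← Real.exp_nat_mul]
        congr 1
        ring
  have hexp_mono : Real.exp (-(t:ℝ)/b) ≤ Real.exp (-(m:ℝ)/b) := by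
    apply Real.exp_le_exp.mpr
    have hmt' : (m:ℝ) ≤ (t:ℝ) := by exact_mod_cast hmt
    have : -(t:ℝ) ≤ -(m:ℝ) := by linarith
    exact (div_le_div_iff_of_pos_right hb').mpr this
  have hfac0 : (0:ℝ) ≤ 1 - (1 - 1/(b:ℝ))^t := by
    have hle1 : (1 - 1/(b:ℝ)) ≤ 1 := by
      have : (0:ℝ) ≤ 1/(b:ℝ) := by positivity
      linarith
    have := pow_le_one₀ hq0 hle1 (n := t)
    linarith
  have hchain1 : (1 - Real.exp (-(m:ℝ)/b)) * OPT1 G f k b ≤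
      (1 - (1 - 1/(b:ℝ))^t) * OPT1 G f k b := by
    apply mul_le_mul_of_nonneg_right _ hOPT1nn
    linarith
  have hchain2 : (1 - (1 - 1/(b:ℝ))^t) * OPT1 G f k b ≤
      (1 - (1 - 1/(b:ℝ))^t) * h Cs :=
    mul_le_mul_of_nonneg_left hOPT1le hfac0
  rw [hSt]
  show h (A t) ≥ (1 - Real.exp (-(m:ℝ)/b)) * OPT1 G f k b
  linarith
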